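/- For all integers c ≥ 1, n ≥ 0, and k ≥ 0, the colored Mahonian number admits the decomposition i_c(n,k) = ∑_{a ≥ 0, b ≥ 0, c·a + b = k} |Com^{<c}_{n,b}| · i(n,a), where Com^{<c}_{n,b} is the set of n-tuples (b_1,…,b_n) of integers with 0 ≤ b_i < c for all i and b_1 + ⋯ + b_n = b, and i(n,a) is the classical Mahonian number. -/

import Mathlib

open Finset

/-- The inversion number of a permutation of `Fin n`:
`inv(π) = #{(i,j) : i < j, π(i) > π(j)}`. -/
def invNum {n : ℕ} (π : Equiv.Perm (Fin n)) : ℕ :=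
  ((Finset.univ : Finset (Fin n × Fin n)).filter
    (fun p => p.1 < p.2 ∧ π p.2 < π p.1)).card

/-- The colored inversion statistic on a colored permutation `σ = (π, f)`:
`inv_c(σ) = inv(π) + ∑ f(j) + c·#{(i,j) : i < j, π(i) < π(j), f(j) ≠ 0}`. -/
def invC (c : ℕ) {n : ℕ} (σ : Equiv.Perm (Fin n) × (Fin n → Fin c)) : ℕ :=
  invNum σ.1 + (∑ j, (σ.2 j : ℕ)) +
    c * ((Finset.univ : Finset (Fin n × Fin n)).filter
      (fun p => p.1 < p.2 ∧ σ.1 p.1 < σ.1 p.2 ∧ (σ.2 p.2 : ℕ) ≠ 0)).card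

/-- The colored Mahonian number `i_c(n,k)`: the number of colored permutations
of size `n` with exactly `k` colored inversions. -/
noncomputable def mahonianC (c n k : ℕ) : ℕ :=
  Nat.card {σ : Equiv.Perm (Fin n) × (Fin n → Fin c) // invC c σ = k}

/-- The classical Mahonian number `i(n,a)`: the number of permutations of
`{1,…,n}` with exactly `a` inversions. -/
noncomputable def mahonian (n a : ℕ) : ℕ :=
  Nat.card {π : Equiv.Perm (Fin n) // invNum π = a}

/-- `|Com^{<c}_{n,b}|`: the number of `n`-tuples `(b₁,…,bₙ)` of integers with
`0 ≤ bᵢ < c` for all `i` and `b₁ + ⋯ + bₙ = b`. -/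
noncomputable def comCount (c n b : ℕ) : ℕ :=
  Nat.card {t : Fin n → ℕ // (∀ i, t i < c) ∧ ∑ i, t i = b}

open Equiv Polynomial

noncomputable def geomP (M : ℕ) : Polynomial ℕ := ∑ i ∈ Finset.range M, Polynomial.X ^ i

noncomputable def Pn (c n : ℕ) : Polynomial ℕ := ∏ j ∈ Finset.range n, geomP (c * (j + 1))

lemma geomP_split (c M : ℕ) : geomP (c * M) = geomP c * ∑ d ∈ Finset.range M, X ^ (c * d) := by
  induction M with
  | zero => simp [geomP]
  | succ M ih =>
      rw [Nat.mul_succ, geomP, Finset.sum_range_add, ← geomP, ih, Finset.sum_range_succ,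
        mul_add]
      congr 1
      rw [geomP, Finset.sum_mul]
      exact Finset.sum_congr rfl fun i _ => by rw [← pow_add, add_comm (c * M) i, pow_add, mul_comm]

lemma expand_geomP (c M : ℕ) : Polynomial.expand ℕ c (geomP M) = ∑ d ∈ Finset.range M, X ^ (c * d) := by
  rw [geomP, map_sum]
  exact Finset.sum_congr rfl fun i _ => by rw [map_pow, expand_X, ← pow_mul]

lemma Pn_eq (c n : ℕ) : Pn c n = (geomP c) ^ n * Polynomial.expand ℕ c (Pn 1 n) := by
  have hpow : (geomP c) ^ n = ∏ _j ∈ Finset.range n, geomP c := by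
    rw [Finset.prod_const, Finset.card_range]
  rw [Pn, Pn, map_prod, hpow, ← Finset.prod_mul_distrib]
  exact Finset.prod_congr rfl fun j _ => by
    rw [expand_geomP, ← geomP_split, one_mul]

variable {m : ℕ}

def up (v : Fin (m + 1)) (σ : Equiv.Perm (Fin m)) : Equiv.Perm (Fin (m + 1)) :=
  (finSuccEquiv' (Fin.last m)).trans ((Equiv.optionCongr σ).trans (finSuccEquiv' v).symm)

@[simp] lemma up_last (v : Fin (m + 1)) (σ : Equiv.Perm (Fin m)) : up v σ (Fin.last m) = v := by
  simp [up, finSuccEquiv'_at, finSuccEquiv'_symm_none]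

@[simp] lemma up_castSucc (v : Fin (m + 1)) (σ : Equiv.Perm (Fin m)) (j : Fin m) :
    up v σ (Fin.castSucc j) = v.succAbove (σ j) := by
  simp [up, finSuccEquiv'_last_apply_castSucc, finSuccEquiv'_symm_some]

lemma up_injective (v : Fin (m + 1)) : Function.Injective (up v) := by
  intro σ τ h
  ext j
  have h2 : up v σ (Fin.castSucc j) = up v τ (Fin.castSucc j) := by rw [h]
  rw [up_castSucc, up_castSucc] at h2
  exact congrArg Fin.val (Fin.succAbove_right_injective h2)

lemma up_surj (v : Fin (m + 1)) (π : Equiv.Perm (Fin (m + 1))) (hπ : π (Fin.last m) = v) :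
    ∃ σ, up v σ = π := by
  set e : Option (Fin m) ≃ Option (Fin m) :=
    (finSuccEquiv' (Fin.last m)).symm.trans (π.trans (finSuccEquiv' v)) with he
  refine ⟨Equiv.removeNone e, ?_⟩
  ext x
  induction x using Fin.lastCases with
  | last => rw [up_last, hπ]
  | cast j =>
      rw [up_castSucc]
      obtain ⟨y, hy⟩ : ∃ y, finSuccEquiv' v (π (Fin.castSucc j)) = some y := by
        rcases h' : finSuccEquiv' v (π (Fin.castSucc j)) with _ | y
        · exfalso
          have : π (Fin.castSucc j) = v := by
            have := congrArg (finSuccEquiv' v).symm h'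
            simpa [finSuccEquiv'_symm_none] using this
          rw [← hπ] at this
          exact (Fin.castSucc_lt_last j).ne (π.injective this)
        · exact ⟨y, rfl⟩
      have hes : e (some j) = some y := by
        simp [he, finSuccEquiv'_symm_some, hy]
      have h3 := Equiv.removeNone_some e ⟨y, hes⟩
      rw [hes] at h3
      have h4 : Equiv.removeNone e j = y := Option.some_injective _ h3
      rw [h4, ← (finSuccEquiv' v).symm_apply_apply (π (Fin.castSucc j)), hy,
        finSuccEquiv'_symm_some]

lemma pair_count_succ (Q : Fin (m + 1) × Fin (m + 1) → Prop) [DecidablePred Q] :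
    ((Finset.univ : Finset (Fin (m + 1) × Fin (m + 1))).filter Q).card =
      ((Finset.univ : Finset (Fin m × Fin m)).filter
          (fun p => Q (Fin.castSucc p.1, Fin.castSucc p.2))).card
      + ((Finset.univ : Finset (Fin m)).filter
          (fun i => Q (Fin.castSucc i, Fin.last m))).card
      + ((Finset.univ : Finset (Fin m)).filter
          (fun j => Q (Fin.last m, Fin.castSucc j))).card
      + (if Q (Fin.last m, Fin.last m) then 1 else 0) := by
  simp only [Finset.card_filter, Fintype.sum_prod_type]
  rw [Fin.sum_univ_castSucc
    (f := fun x => ∑ y : Fin (m + 1), if Q (x, y) then 1 else 0)]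
  rw [Fin.sum_univ_castSucc (f := fun y => if Q (Fin.last m, y) then 1 else 0)]
  have : ∀ x : Fin (m + 1), (∑ y : Fin (m + 1), if Q (x, y) then 1 else 0)
      = (∑ j : Fin m, if Q (x, Fin.castSucc j) then 1 else 0) + (if Q (x, Fin.last m) then 1 else 0) :=
    fun x => Fin.sum_univ_castSucc (f := fun y => if Q (x, y) then 1 else 0)
  simp only [this, Finset.sum_add_distrib]
  ring

lemma card_filter_le_val (v : Fin (m + 1)) :
    ((Finset.univ : Finset (Fin m)).filter (fun j : Fin m => (v : ℕ) ≤ (j : ℕ))).card = m - v := by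
  have h0 : (∑ i ∈ Finset.range m, if (v : ℕ) ≤ i then 1 else 0) = m - (v : ℕ) := by
    rw [← Finset.card_filter]
    rw [show (Finset.range m).filter (fun j => (v : ℕ) ≤ j) = Finset.Ico (v : ℕ) m from by
      ext j; simp only [Finset.mem_filter, Finset.mem_Ico, Finset.mem_range]; omega, Nat.card_Ico]
  calc ((Finset.univ : Finset (Fin m)).filter (fun j : Fin m => (v : ℕ) ≤ (j : ℕ))).card
      = ∑ i : Fin m, if (v : ℕ) ≤ (i : ℕ) then 1 else 0 := Finset.card_filter _ _
    _ = ∑ i ∈ Finset.range m, if (v : ℕ) ≤ i then 1 else 0 :=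
        Fin.sum_univ_eq_sum_range (fun j => if (v : ℕ) ≤ j then 1 else 0) m
    _ = m - (v : ℕ) := h0

lemma card_filter_lt_val (v : Fin (m + 1)) :
    ((Finset.univ : Finset (Fin m)).filter (fun j : Fin m => (j : ℕ) < (v : ℕ))).card = v := by
  have h0 : (∑ i ∈ Finset.range m, if i < (v : ℕ) then 1 else 0) = (v : ℕ) := by
    rw [← Finset.card_filter]
    rw [show (Finset.range m).filter (fun j => j < (v : ℕ)) = Finset.range (v : ℕ) from by
      ext j; simp only [Finset.mem_filter, Finset.mem_range]; omega, Finset.card_range]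
  calc ((Finset.univ : Finset (Fin m)).filter (fun j : Fin m => (j : ℕ) < (v : ℕ))).card
      = ∑ i : Fin m, if (i : ℕ) < (v : ℕ) then 1 else 0 := Finset.card_filter _ _
    _ = ∑ i ∈ Finset.range m, if i < (v : ℕ) then 1 else 0 :=
        Fin.sum_univ_eq_sum_range (fun j => if j < (v : ℕ) then 1 else 0) m
    _ = (v : ℕ) := h0

lemma card_perm_reindex (σ : Equiv.Perm (Fin m)) (P : Fin m → Prop) [DecidablePred P] :
    ((Finset.univ : Finset (Fin m)).filter (fun i => P (σ i))).card =
      ((Finset.univ : Finset (Fin m)).filter P).card := by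
  apply Finset.card_bij (fun i _ => σ i)
  · intro a ha; simp only [Finset.mem_filter, Finset.mem_univ, true_and] at ha ⊢; exact ha
  · intro a _ b _ h; exact σ.injective h
  · intro b hb
    refine ⟨σ.symm b, ?_, by simp⟩
    simp only [Finset.mem_filter, Finset.mem_univ, true_and, Equiv.apply_symm_apply] at hb ⊢
    exact hb

lemma invNum_up (v : Fin (m + 1)) (σ : Equiv.Perm (Fin m)) :
    invNum (up v σ) = invNum σ + (m - v) := by
  rw [invNum, pair_count_succ]
  have h1 : ((Finset.univ : Finset (Fin m × Fin m)).filter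
      (fun p => Fin.castSucc p.1 < Fin.castSucc p.2 ∧
        up v σ (Fin.castSucc p.2) < up v σ (Fin.castSucc p.1))).card = invNum σ := by
    rw [invNum]
    congr 1
    apply Finset.filter_congr
    intro p _
    simp only [up_castSucc, Fin.castSucc_lt_castSucc_iff, Fin.succAbove_lt_succAbove_iff]
  have h2 : ((Finset.univ : Finset (Fin m)).filter
      (fun i => Fin.castSucc i < Fin.last m ∧ up v σ (Fin.last m) < up v σ (Fin.castSucc i))).card
      = m - v := by
    have : ∀ i : Fin m, (Fin.castSucc i < Fin.last m ∧
        up v σ (Fin.last m) < up v σ (Fin.castSucc i)) ↔ ((v : ℕ) ≤ (σ i : ℕ)) := by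
      intro i
      simp only [Fin.castSucc_lt_last, true_and, up_last, up_castSucc]
      rw [Fin.lt_succAbove_iff_le_castSucc]
      exact ⟨fun h => h, fun h => h⟩
    rw [Finset.filter_congr (fun i _ => this i),
      card_perm_reindex σ (fun j => (v : ℕ) ≤ (j : ℕ)), card_filter_le_val]
  have h3 : ((Finset.univ : Finset (Fin m)).filter
      (fun j => Fin.last m < Fin.castSucc j ∧
        up v σ (Fin.castSucc j) < up v σ (Fin.last m))).card = 0 := by
    rw [Finset.card_eq_zero]
    apply Finset.filter_false_of_mem
    intro j _
    simp only [not_and]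
    intro h
    exact absurd h (Fin.castSucc_lt_last j).not_gt.elim
  rw [h1, h2, h3]
  simp [lt_irrefl]

lemma sum_snoc_val {c : ℕ} (g : Fin m → Fin c) (r : Fin c) :
    (∑ j : Fin (m + 1), ((Fin.snoc g r : Fin (m + 1) → Fin c) j : ℕ)) = (∑ j, (g j : ℕ)) + r := by
  rw [Fin.sum_univ_castSucc]
  simp [Fin.snoc_castSucc, Fin.snoc_last]

lemma colorPairs_up {c : ℕ} (v : Fin (m + 1)) (r : Fin c) (σ : Equiv.Perm (Fin m))
    (g : Fin m → Fin c) :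
    ((Finset.univ : Finset (Fin (m + 1) × Fin (m + 1))).filter
        (fun p => p.1 < p.2 ∧ up v σ p.1 < up v σ p.2 ∧
          ((Fin.snoc g r : Fin (m + 1) → Fin c) p.2 : ℕ) ≠ 0)).card =
      ((Finset.univ : Finset (Fin m × Fin m)).filter
        (fun p => p.1 < p.2 ∧ σ p.1 < σ p.2 ∧ (g p.2 : ℕ) ≠ 0)).card
      + (if (r : ℕ) = 0 then 0 else (v : ℕ)) := by
  rw [pair_count_succ]
  have h1 : ((Finset.univ : Finset (Fin m × Fin m)).filter
      (fun p => Fin.castSucc p.1 < Fin.castSucc p.2 ∧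
        up v σ (Fin.castSucc p.1) < up v σ (Fin.castSucc p.2) ∧
        ((Fin.snoc g r : Fin (m + 1) → Fin c) (Fin.castSucc p.2) : ℕ) ≠ 0)).card =
      ((Finset.univ : Finset (Fin m × Fin m)).filter
        (fun p => p.1 < p.2 ∧ σ p.1 < σ p.2 ∧ (g p.2 : ℕ) ≠ 0)).card := by
    congr 1
    apply Finset.filter_congr
    intro p _
    simp only [up_castSucc, Fin.castSucc_lt_castSucc_iff, Fin.succAbove_lt_succAbove_iff,
      Fin.snoc_castSucc]
  have h2 : ((Finset.univ : Finset (Fin m)).filter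
      (fun i => Fin.castSucc i < Fin.last m ∧
        up v σ (Fin.castSucc i) < up v σ (Fin.last m) ∧
        ((Fin.snoc g r : Fin (m + 1) → Fin c) (Fin.last m) : ℕ) ≠ 0)).card =
      (if (r : ℕ) = 0 then 0 else (v : ℕ)) := by
    by_cases hr : (r : ℕ) = 0
    · rw [if_pos hr, Finset.card_eq_zero]
      apply Finset.filter_false_of_mem
      intro i _
      simp [Fin.snoc_last, hr]
    · rw [if_neg hr]
      have : ∀ i : Fin m, (Fin.castSucc i < Fin.last m ∧
          up v σ (Fin.castSucc i) < up v σ (Fin.last m) ∧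
          ((Fin.snoc g r : Fin (m + 1) → Fin c) (Fin.last m) : ℕ) ≠ 0) ↔
          (((σ i : Fin m) : ℕ) < (v : ℕ)) := by
        intro i
        simp only [Fin.castSucc_lt_last, true_and, up_last, up_castSucc, Fin.snoc_last, hr,
          ne_eq, not_false_iff, and_true]
        rw [Fin.succAbove_lt_iff_castSucc_lt]
        exact ⟨fun h => h, fun h => h⟩
      rw [Finset.filter_congr (fun i _ => this i),
        card_perm_reindex σ (fun j : Fin m => ((j : Fin m) : ℕ) < (v : ℕ)), card_filter_lt_val]
  have h3 : ((Finset.univ : Finset (Fin m)).filter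
      (fun j => Fin.last m < Fin.castSucc j ∧
        up v σ (Fin.last m) < up v σ (Fin.castSucc j) ∧
        ((Fin.snoc g r : Fin (m + 1) → Fin c) (Fin.castSucc j) : ℕ) ≠ 0)).card = 0 := by
    rw [Finset.card_eq_zero]
    apply Finset.filter_false_of_mem
    intro j _
    simp only [not_and]
    intro h
    exact absurd h (Fin.castSucc_lt_last j).not_gt.elim
  rw [h1, h2, h3]
  simp [lt_irrefl]

lemma invC_up {c : ℕ} (v : Fin (m + 1)) (r : Fin c) (x : Equiv.Perm (Fin m) × (Fin m → Fin c)) :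
    invC c (up v x.1, (Fin.snoc x.2 r : Fin (m + 1) → Fin c)) =
      invC c x + ((m - (v : ℕ)) + (r : ℕ) + c * (if (r : ℕ) = 0 then 0 else (v : ℕ))) := by
  rw [invC, invC]
  simp only
  rw [invNum_up, sum_snoc_val, colorPairs_up, Nat.mul_add]
  ring

lemma upC_injective {c : ℕ} (v : Fin (m + 1)) (r : Fin c) :
    Function.Injective (fun x : Equiv.Perm (Fin m) × (Fin m → Fin c) =>
      ((up v x.1, (Fin.snoc x.2 r : Fin (m + 1) → Fin c)) :
        Equiv.Perm (Fin (m + 1)) × (Fin (m + 1) → Fin c))) := by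
  intro x y h
  have h1 : up v x.1 = up v y.1 := congrArg Prod.fst h
  have h2 : (Fin.snoc x.2 r : Fin (m + 1) → Fin c) = Fin.snoc y.2 r := congrArg Prod.snd h
  have hx2 : x.2 = y.2 := by
    funext j
    have := congrFun h2 (Fin.castSucc j)
    rwa [Fin.snoc_castSucc, Fin.snoc_castSucc] at this
  exact Prod.ext (up_injective v h1) hx2

lemma fiber_eq_image {c : ℕ} (v : Fin (m + 1)) (r : Fin c) (k : ℕ) :
    ((Finset.univ : Finset (Equiv.Perm (Fin (m + 1)) × (Fin (m + 1) → Fin c))).filter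
        (fun σ => invC c σ = k ∧ σ.1 (Fin.last m) = v ∧ σ.2 (Fin.last m) = r)) =
      Finset.image (fun x : Equiv.Perm (Fin m) × (Fin m → Fin c) =>
          (up v x.1, (Fin.snoc x.2 r : Fin (m + 1) → Fin c)))
        ((Finset.univ : Finset (Equiv.Perm (Fin m) × (Fin m → Fin c))).filter
          (fun x => invC c x +
            ((m - (v : ℕ)) + (r : ℕ) + c * (if (r : ℕ) = 0 then 0 else (v : ℕ))) = k)) := by
  ext σ
  simp only [Finset.mem_filter, Finset.mem_univ, true_and, Finset.mem_image]
  constructor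
  · rintro ⟨hk, hv, hr⟩
    obtain ⟨τ, hτ⟩ := up_surj v σ.1 hv
    refine ⟨(τ, Fin.init σ.2), ?_, ?_⟩
    · have hσ : σ = (up v τ, (Fin.snoc (Fin.init σ.2) r : Fin (m + 1) → Fin c)) := by
        refine Prod.ext hτ.symm ?_
        rw [← hr, Fin.snoc_init_self]
      rw [hσ] at hk
      rw [invC_up (v := v) (r := r) (x := (τ, Fin.init σ.2))] at hk
      exact hk
    · refine Prod.ext hτ ?_
      simp only
      rw [← hr, Fin.snoc_init_self]
  · rintro ⟨x, hx, rfl⟩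
    refine ⟨?_, up_last v x.1, by simp⟩
    rw [invC_up]
    exact hx

lemma fiber_card {c : ℕ} (v : Fin (m + 1)) (r : Fin c) (k : ℕ) :
    ((Finset.univ : Finset (Equiv.Perm (Fin (m + 1)) × (Fin (m + 1) → Fin c))).filter
        (fun σ => invC c σ = k ∧ σ.1 (Fin.last m) = v ∧ σ.2 (Fin.last m) = r)).card =
      (if (m - (v : ℕ)) + (r : ℕ) + c * (if (r : ℕ) = 0 then 0 else (v : ℕ)) ≤ k then
        ((Finset.univ : Finset (Equiv.Perm (Fin m) × (Fin m → Fin c))).filter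
          (fun x => invC c x =
            k - ((m - (v : ℕ)) + (r : ℕ) + c * (if (r : ℕ) = 0 then 0 else (v : ℕ))))).card
       else 0) := by
  rw [fiber_eq_image, Finset.card_image_of_injective _ (upC_injective v r)]
  set h := (m - (v : ℕ)) + (r : ℕ) + c * (if (r : ℕ) = 0 then 0 else (v : ℕ)) with hh
  by_cases hle : h ≤ k
  · rw [if_pos hle]
    congr 1
    apply Finset.filter_congr
    intro x _
    omega
  · rw [if_neg hle, Finset.card_eq_zero]
    apply Finset.filter_false_of_mem
    intro x _
    omega

def enc (c m : ℕ) (p : Fin (m + 1) × Fin c) : ℕ :=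
  (m - (p.1 : ℕ)) + (p.2 : ℕ) + c * (if (p.2 : ℕ) = 0 then 0 else (p.1 : ℕ))

lemma enc_aux (c' m V R V' R' : ℕ) (hv : V ≤ m) (hv' : V' ≤ m) (hr : R ≤ c') (hr' : R' ≤ c')
    (h : (m - V) + R + (c' + 1) * (if R = 0 then 0 else V)
       = (m - V') + R' + (c' + 1) * (if R' = 0 then 0 else V')) :
    V = V' ∧ R = R' := by
  have e1 : (c' + 1) * V = c' * V + V := by ring
  have e1' : (c' + 1) * V' = c' * V' + V' := by ring
  by_cases h0 : R = 0 <;> by_cases h0' : R' = 0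
  · rw [if_pos h0, if_pos h0'] at h; omega
  · rw [if_pos h0, if_neg h0'] at h; omega
  · rw [if_neg h0, if_pos h0'] at h; omega
  · rw [if_neg h0, if_neg h0'] at h
    have hVV : V = V' := by
      rcases Nat.lt_trichotomy V V' with hlt | heq | hgt
      · exfalso
        have h1 : c' * V + c' ≤ c' * V' := by
          have h2 := Nat.mul_le_mul_left c' hlt
          rw [Nat.mul_succ] at h2
          exact h2
        omega
      · exact heq
      · exfalso
        have h1 : c' * V' + c' ≤ c' * V := by
          have h2 := Nat.mul_le_mul_left c' hgt
          rw [Nat.mul_succ] at h2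
          exact h2
        omega
    subst hVV
    exact ⟨rfl, by omega⟩

lemma enc_bound (c' m V R : ℕ) (hv : V ≤ m) (hr : R ≤ c') :
    (m - V) + R + (c' + 1) * (if R = 0 then 0 else V) < (c' + 1) * (m + 1) := by
  have e1 : (c' + 1) * V = c' * V + V := by ring
  have e2 : (c' + 1) * (m + 1) = m + 1 + c' * m + c' := by ring
  have hB : c' * V ≤ c' * m := Nat.mul_le_mul_left c' hv
  by_cases h0 : R = 0
  · rw [if_pos h0]; omega
  · rw [if_neg h0]; omega

lemma enc_injective {c : ℕ} (hc : 1 ≤ c) : Function.Injective (enc c m) := by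
  obtain ⟨c', rfl⟩ : ∃ c', c = c' + 1 := ⟨c - 1, by omega⟩
  rintro ⟨v, r⟩ ⟨v', r'⟩ h
  have hs := enc_aux c' m (v : ℕ) (r : ℕ) (v' : ℕ) (r' : ℕ)
    (Fin.is_le v) (Fin.is_le v') (Fin.is_le r) (Fin.is_le r') h
  exact Prod.ext (Fin.ext hs.1) (Fin.ext hs.2)

lemma enc_image {c : ℕ} (hc : 1 ≤ c) :
    Finset.image (enc c m) Finset.univ = Finset.range (c * (m + 1)) := by
  obtain ⟨c', rfl⟩ : ∃ c', c = c' + 1 := ⟨c - 1, by omega⟩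
  apply Finset.eq_of_subset_of_card_le
  · intro i hi
    simp only [Finset.mem_image, Finset.mem_univ, true_and] at hi
    obtain ⟨⟨v, r⟩, rfl⟩ := hi
    rw [Finset.mem_range]
    exact enc_bound c' m (v : ℕ) (r : ℕ) (Fin.is_le v) (Fin.is_le r)
  · rw [Finset.card_range, Finset.card_image_of_injective _ (enc_injective (by omega))]
    simp [Finset.card_univ, mul_comm]

lemma cardCP_step {c : ℕ} (hc : 1 ≤ c) (k : ℕ) :
    ((Finset.univ : Finset (Equiv.Perm (Fin (m + 1)) × (Fin (m + 1) → Fin c))).filter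
        (fun σ => invC c σ = k)).card =
      ∑ i ∈ Finset.range (c * (m + 1)),
        (if i ≤ k then
          ((Finset.univ : Finset (Equiv.Perm (Fin m) × (Fin m → Fin c))).filter
            (fun x => invC c x = k - i)).card
         else 0) := by
  rw [Finset.card_eq_sum_card_fiberwise
    (f := fun σ : Equiv.Perm (Fin (m + 1)) × (Fin (m + 1) → Fin c) =>
      ((σ.1 (Fin.last m), σ.2 (Fin.last m)) : Fin (m + 1) × Fin c))
    (t := Finset.univ) (fun x _ => Finset.mem_univ _)]
  rw [← enc_image (m := m) hc, Finset.sum_image (fun p _ q _ h => enc_injective hc h)]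
  apply Finset.sum_congr rfl
  rintro ⟨v, r⟩ -
  rw [Finset.filter_filter]
  have : ∀ σ : Equiv.Perm (Fin (m + 1)) × (Fin (m + 1) → Fin c),
      (invC c σ = k ∧ (σ.1 (Fin.last m), σ.2 (Fin.last m)) = (v, r)) ↔
      (invC c σ = k ∧ σ.1 (Fin.last m) = v ∧ σ.2 (Fin.last m) = r) := by
    intro σ
    rw [Prod.mk.injEq]
  rw [Finset.filter_congr (fun σ _ => this σ), fiber_card]
  rfl

lemma coeff_mul_geomP (p : Polynomial ℕ) (M k : ℕ) :
    (p * geomP M).coeff k = ∑ i ∈ Finset.range M, (if i ≤ k then p.coeff (k - i) else 0) := by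
  rw [geomP, Finset.mul_sum, Polynomial.finset_sum_coeff]
  exact Finset.sum_congr rfl fun i _ => Polynomial.coeff_mul_X_pow' p i k

lemma invC_nil {c : ℕ} (σ : Equiv.Perm (Fin 0) × (Fin 0 → Fin c)) : invC c σ = 0 := by
  simp [invC, invNum]

lemma cardCP_eq_coeff (c : ℕ) (hc : 1 ≤ c) :
    ∀ n k, ((Finset.univ : Finset (Equiv.Perm (Fin n) × (Fin n → Fin c))).filter
      (fun σ => invC c σ = k)).card = (Pn c n).coeff k := by
  intro n
  induction n with
  | zero =>
      intro k
      by_cases hk : k = 0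
      · subst hk
        rw [Finset.filter_true_of_mem (fun σ _ => invC_nil σ)]
        simp [Pn, Finset.card_univ]
      · rw [Finset.filter_false_of_mem (fun σ _ => by rw [invC_nil]; omega) ,
          Finset.card_empty]
        simp [Pn, Polynomial.coeff_one, hk]
  | succ m ih =>
      intro k
      rw [cardCP_step hc k, Pn, Finset.prod_range_succ, ← Pn, coeff_mul_geomP]
      exact Finset.sum_congr rfl fun i _ => by
        by_cases hik : i ≤ k
        · rw [if_pos hik, if_pos hik, ih (k - i)]
        · rw [if_neg hik, if_neg hik]

lemma snoc_injective_tuple {c : ℕ} (r : Fin c) :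
    Function.Injective (fun g : Fin m → Fin c => (Fin.snoc g r : Fin (m + 1) → Fin c)) := by
  intro x y h
  funext j
  have h2 : (Fin.snoc x r : Fin (m + 1) → Fin c) (Fin.castSucc j)
      = (Fin.snoc y r : Fin (m + 1) → Fin c) (Fin.castSucc j) := congrFun h (Fin.castSucc j)
  rwa [Fin.snoc_castSucc, Fin.snoc_castSucc] at h2

lemma tuple_fiber_card {c : ℕ} (r : Fin c) (b : ℕ) :
    ((Finset.univ : Finset (Fin (m + 1) → Fin c)).filter
        (fun g => (∑ j, (g j : ℕ)) = b ∧ g (Fin.last m) = r)).card =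
      (if (r : ℕ) ≤ b then
        ((Finset.univ : Finset (Fin m → Fin c)).filter
          (fun g => (∑ j, (g j : ℕ)) = b - (r : ℕ))).card
       else 0) := by
  have himg : ((Finset.univ : Finset (Fin (m + 1) → Fin c)).filter
      (fun g => (∑ j, (g j : ℕ)) = b ∧ g (Fin.last m) = r)) =
      Finset.image (fun g : Fin m → Fin c => (Fin.snoc g r : Fin (m + 1) → Fin c))
        ((Finset.univ : Finset (Fin m → Fin c)).filter
          (fun g => (∑ j, (g j : ℕ)) + (r : ℕ) = b)) := by
    ext g
    simp only [Finset.mem_filter, Finset.mem_univ, true_and, Finset.mem_image]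
    constructor
    · rintro ⟨hb, hr⟩
      refine ⟨Fin.init g, ?_, ?_⟩
      · have hg : g = (Fin.snoc (Fin.init g) r : Fin (m + 1) → Fin c) := by
          rw [← hr, Fin.snoc_init_self]
        rw [hg, sum_snoc_val] at hb
        exact hb
      · rw [← hr, Fin.snoc_init_self]
    · rintro ⟨x, hx, rfl⟩
      refine ⟨?_, by simp⟩
      rw [sum_snoc_val]
      exact hx
  rw [himg, Finset.card_image_of_injective _ (snoc_injective_tuple r)]
  by_cases hle : (r : ℕ) ≤ b
  · rw [if_pos hle]
    congr 1
    apply Finset.filter_congr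
    intro x _
    omega
  · rw [if_neg hle, Finset.card_eq_zero]
    apply Finset.filter_false_of_mem
    intro x _
    omega

lemma cardTuple_eq_coeff (c : ℕ) :
    ∀ n b, ((Finset.univ : Finset (Fin n → Fin c)).filter
      (fun g => (∑ j, (g j : ℕ)) = b)).card = ((geomP c) ^ n).coeff b := by
  intro n
  induction n with
  | zero =>
      intro b
      by_cases hb : b = 0
      · subst hb
        rw [Finset.filter_true_of_mem (fun g _ => by simp)]
        simp [Finset.card_univ]
      · rw [Finset.filter_false_of_mem (fun g _ => by simp; omega), Finset.card_empty]
        simp [Polynomial.coeff_one, hb]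
  | succ m ih =>
      intro b
      rw [pow_succ, coeff_mul_geomP]
      rw [Finset.card_eq_sum_card_fiberwise
        (f := fun g : Fin (m + 1) → Fin c => g (Fin.last m))
        (t := Finset.univ) (fun x _ => Finset.mem_univ _)]
      rw [← Fin.sum_univ_eq_sum_range
        (fun i => if i ≤ b then ((geomP c) ^ m).coeff (b - i) else 0) c]
      apply Finset.sum_congr rfl
      intro r _
      rw [Finset.filter_filter]
      rw [tuple_fiber_card]
      by_cases hle : (r : ℕ) ≤ b
      · rw [if_pos hle, if_pos hle, ih (b - r)]
      · rw [if_neg hle, if_neg hle]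

lemma mahonianC_eq_coeff (c n k : ℕ) (hc : 1 ≤ c) : mahonianC c n k = (Pn c n).coeff k := by
  rw [mahonianC, Nat.card_eq_fintype_card, Fintype.card_subtype, cardCP_eq_coeff c hc n k]

lemma invC_one {n : ℕ} (σ : Equiv.Perm (Fin n) × (Fin n → Fin 1)) : invC 1 σ = invNum σ.1 := by
  have h1 : (∑ j, ((σ.2 j : ℕ))) = 0 := by
    apply Finset.sum_eq_zero
    intro j _
    omega
  have h2 : ∀ p : Fin n × Fin n, ¬ (p.1 < p.2 ∧ σ.1 p.1 < σ.1 p.2 ∧ (σ.2 p.2 : ℕ) ≠ 0) := by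
    intro p hp
    have := (σ.2 p.2).isLt
    omega
  rw [invC, h1, Finset.filter_false_of_mem (fun p _ => h2 p)]
  simp

lemma mahonian_eq_coeff (n a : ℕ) : mahonian n a = (Pn 1 n).coeff a := by
  rw [← cardCP_eq_coeff 1 le_rfl n a, ← Fintype.card_subtype, mahonian,
    ← Nat.card_eq_fintype_card]
  apply Nat.card_congr
  refine Equiv.subtypeEquiv (Equiv.prodUnique (Equiv.Perm (Fin n)) (Fin n → Fin 1)).symm ?_
  intro π
  rw [Equiv.prodUnique_symm_apply, invC_one]

lemma comCount_eq_coeff (c n b : ℕ) : comCount c n b = ((geomP c) ^ n).coeff b := by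
  rw [← cardTuple_eq_coeff, ← Fintype.card_subtype, comCount, ← Nat.card_eq_fintype_card]
  apply Nat.card_congr
  refine ⟨fun t => ⟨fun i => ⟨t.1 i, t.2.1 i⟩, by
      rw [show (∑ j, ((⟨t.1 j, t.2.1 j⟩ : Fin c) : ℕ)) = ∑ j, t.1 j from rfl]; exact t.2.2⟩,
    fun g => ⟨fun i => (g.1 i : ℕ), fun i => (g.1 i).isLt, g.2⟩, ?_, ?_⟩
  · intro t; apply Subtype.ext; funext i; rfl
  · intro g; apply Subtype.ext; funext i; apply Fin.ext; rfl

/-- `i_c(n,k) = ∑_{a,b ≥ 0, c·a+b=k} |Com^{<c}_{n,b}| · i(n,a)`.  Since `c ≥ 1`,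
every solution of `c·a + b = k` has `a ≤ k` and `b ≤ k`, so the sum below over
all pairs `(a,b) ∈ {0,…,k}² ` with `c·a + b = k` ranges over all solutions. -/
theorem mahonianC_decomposition (c n k : ℕ) (hc : 1 ≤ c) :
    mahonianC c n k =
      ∑ p ∈ (Finset.range (k + 1) ×ˢ Finset.range (k + 1)).filter
          (fun p : ℕ × ℕ => c * p.1 + p.2 = k),
        comCount c n p.2 * mahonian n p.1 := by
  have hcpos : 0 < c := hc
  rw [mahonianC_eq_coeff c n k hc, Pn_eq, Polynomial.coeff_mul]
  rw [Finset.sum_congr rfl (fun x _ => by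
    rw [Polynomial.coeff_expand hcpos, mul_ite, mul_zero] :
      ∀ x ∈ Finset.HasAntidiagonal.antidiagonal k, ((geomP c) ^ n).coeff x.1 *
        ((Polynomial.expand ℕ c) (Pn 1 n)).coeff x.2 =
        if c ∣ x.2 then ((geomP c) ^ n).coeff x.1 * (Pn 1 n).coeff (x.2 / c) else 0)]
  rw [← Finset.sum_filter]
  refine Finset.sum_nbij' (fun x : ℕ × ℕ => ((x.2 / c, x.1) : ℕ × ℕ))
    (fun p : ℕ × ℕ => ((p.2, c * p.1) : ℕ × ℕ)) ?_ ?_ ?_ ?_ ?_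
  · rintro ⟨u, w⟩ hx
    simp only [Finset.mem_filter, Finset.HasAntidiagonal.mem_antidiagonal] at hx
    obtain ⟨huw, d, rfl⟩ := hx
    simp only [Finset.mem_filter, Finset.mem_product, Finset.mem_range]
    have hd : c * d / c = d := Nat.mul_div_cancel_left d hcpos
    have hdd : d ≤ c * d := Nat.le_mul_of_pos_left d hcpos
    refine ⟨⟨by rw [hd]; omega, by omega⟩, by rw [hd]; omega⟩
  · rintro ⟨a, b⟩ hp
    simp only [Finset.mem_filter, Finset.mem_product, Finset.mem_range] at hp
    simp only [Finset.mem_filter, Finset.HasAntidiagonal.mem_antidiagonal]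
    exact ⟨by omega, ⟨a, rfl⟩⟩
  · rintro ⟨u, w⟩ hx
    simp only [Finset.mem_filter, Finset.HasAntidiagonal.mem_antidiagonal] at hx
    obtain ⟨-, d, rfl⟩ := hx
    simp [Nat.mul_div_cancel_left d hcpos]
  · rintro ⟨a, b⟩ -
    simp [Nat.mul_div_cancel_left a hcpos]
  · rintro ⟨u, w⟩ hx
    simp only [Finset.mem_filter, Finset.HasAntidiagonal.mem_antidiagonal] at hx
    obtain ⟨-, d, rfl⟩ := hx
    rw [comCount_eq_coeff, mahonian_eq_coeff]
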